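/- Let k ≥ 2 and f : ℕ → ℂ with ∑ |f(n)|/n^k < ∞. Then (1/(x(log x)^{k-1})) ∑_{n₁⋯n_k ≤ x} f(gcd(n₁,…,n_k)) converges to (1/((k-1)! ζ(k))) ∑_{n=1}^∞ f(n)/n^k as x → ∞. -/

import Mathlib

open Finset Filter

noncomputable section

/-- The set of ordered `k`-tuples of positive integers with product `n`. -/
def tuplesProd (k n : ℕ) : Finset (Fin k → ℕ) :=
  (Fintype.piFinset fun _ => n.divisors).filter fun v => ∏ i, v i = n


namespace HypWin

def Sfin (k N : ℕ) : Finset (Fin k → ℕ) :=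
  (Fintype.piFinset fun _ => Finset.Icc 1 N).filter fun v => ∏ i, v i ≤ N

def A (k N : ℕ) : ℕ := (Sfin k N).card

lemma mem_Sfin {k N : ℕ} {v : Fin k → ℕ} :
    v ∈ Sfin k N ↔ (∀ i, 1 ≤ v i) ∧ ∏ i, v i ≤ N := by
  simp only [Sfin, mem_filter, Fintype.mem_piFinset, mem_Icc]
  constructor
  · rintro ⟨h1, h2⟩; exact ⟨fun i => (h1 i).1, h2⟩
  · rintro ⟨h1, h2⟩
    refine ⟨fun i => ⟨h1 i, le_trans ?_ h2⟩, h2⟩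
    exact Finset.single_le_prod' (fun j _ => h1 j) (mem_univ i)

lemma sum_tuplesProd {M : Type*} [AddCommMonoid M] (k N : ℕ) (h : (Fin k → ℕ) → M) :
    ∑ n ∈ Icc 1 N, ∑ v ∈ tuplesProd k n, h v = ∑ v ∈ Sfin k N, h v := by
  have hS : Sfin k N = (Icc 1 N).biUnion (tuplesProd k) := by
    ext v
    simp only [mem_biUnion, mem_Icc, tuplesProd, mem_filter, Fintype.mem_piFinset,
      Nat.mem_divisors, mem_Sfin]
    constructor
    · rintro ⟨h1, h2⟩
      have hpos : 0 < ∏ i, v i := Finset.prod_pos fun i _ => h1 i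
      exact ⟨∏ i, v i, ⟨hpos, h2⟩,
        fun i => ⟨Finset.dvd_prod_of_mem v (mem_univ i), hpos.ne'⟩, rfl⟩
    · rintro ⟨n, ⟨hn1, hn2⟩, hd, rfl⟩
      exact ⟨fun i => Nat.pos_of_dvd_of_pos (hd i).1 hn1, hn2⟩
  rw [hS, Finset.sum_biUnion ?_]
  · intro a _ b _ hab
    simp only [Function.onFun, Finset.disjoint_left]
    intro v hv hv'
    simp only [tuplesProd, mem_filter] at hv hv'
    exact hab (hv.2 ▸ hv'.2)

lemma A_zero {k : ℕ} (hk : 1 ≤ k) : A k 0 = 0 := by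
  rw [A, Finset.card_eq_zero]
  ext v
  simp only [mem_Sfin, Finset.notMem_empty, iff_false, not_and]
  intro h1 h2
  have : 0 < ∏ i, v i := Finset.prod_pos fun i _ => h1 i
  omega

lemma A_one (N : ℕ) : A 1 N = N := by
  rw [A]
  have : Sfin 1 N = (Finset.Icc 1 N).image (fun d _ => d) := by
    ext v
    simp only [mem_Sfin, mem_image, mem_Icc]
    constructor
    · rintro ⟨h1, h2⟩
      refine ⟨v 0, ⟨h1 0, ?_⟩, ?_⟩
      · simpa [Fin.prod_univ_one] using h2
      · funext i; congr 1; exact Subsingleton.elim _ _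
    · rintro ⟨d, ⟨hd1, hd2⟩, rfl⟩
      exact ⟨fun _ => hd1, by simpa [Fin.prod_univ_one] using hd2⟩
  rw [this, Finset.card_image_of_injective _ (fun a b h => congrFun h 0), Nat.card_Icc]
  omega

lemma A_succ (k N : ℕ) : A (k + 1) N = ∑ d ∈ Icc 1 N, A k (N / d) := by
  rw [A, Finset.card_eq_sum_card_fiberwise (f := fun v => v 0) (t := Icc 1 N) ?_]
  · refine Finset.sum_congr rfl fun d hd => ?_
    rw [mem_Icc] at hd
    rw [A]
    apply Finset.card_nbij' (i := fun v => Fin.tail v) (j := fun w => Fin.cons d w)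
    · intro v hv
      simp only [Finset.mem_coe, mem_filter, mem_Sfin] at hv
      obtain ⟨⟨h1, h2⟩, h0⟩ := hv
      rw [Finset.mem_coe, mem_Sfin]
      refine ⟨fun i => h1 i.succ, ?_⟩
      rw [Nat.le_div_iff_mul_le (by omega : 0 < d), mul_comm]
      calc d * ∏ i, Fin.tail v i = ∏ i, v i := by
            rw [Fin.prod_univ_succ, h0]; rfl
        _ ≤ N := h2
    · intro w hw
      rw [Finset.mem_coe, mem_Sfin] at hw
      obtain ⟨h1, h2⟩ := hw
      simp only [Finset.mem_coe, mem_filter, mem_Sfin]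
      refine ⟨⟨fun i => ?_, ?_⟩, Fin.cons_zero _ _⟩
      · refine Fin.cases ?_ ?_ i
        · simpa using hd.1
        · intro j; simpa using h1 j
      · rw [Fin.prod_univ_succ, Fin.cons_zero]
        have := (Nat.le_div_iff_mul_le (by omega : 0 < d)).mp h2
        simp only [Fin.cons_succ]
        calc d * ∏ i, w i = (∏ i, w i) * d := mul_comm _ _
          _ ≤ N := this
    · intro v hv
      simp only [Finset.mem_coe, mem_filter] at hv
      rw [← hv.2]
      exact (Fin.cons_self_tail v)
    · intro w _
      funext i; simp [Fin.tail]
  · intro v hv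
    rw [Finset.mem_coe, mem_Sfin] at hv
    rw [Finset.mem_coe, mem_Icc]
    exact ⟨hv.1 0, le_trans (Finset.single_le_prod' (fun j _ => hv.1 j) (mem_univ 0)) hv.2⟩

lemma card_dvd_filter (k N d : ℕ) (hd : 1 ≤ d) :
    ((Sfin k N).filter fun v => ∀ i, d ∣ v i).card = A k (N / d ^ k) := by
  rw [A]
  apply Finset.card_nbij' (i := fun v => fun i => v i / d) (j := fun w => fun i => d * w i)
  · intro v hv
    simp only [Finset.mem_coe, mem_filter, mem_Sfin] at hv
    obtain ⟨⟨h1, h2⟩, h3⟩ := hv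
    rw [Finset.mem_coe, mem_Sfin]
    refine ⟨fun i => Nat.one_le_div_iff (by omega) |>.mpr (Nat.le_of_dvd (h1 i) (h3 i)), ?_⟩
    rw [Nat.le_div_iff_mul_le (by positivity)]
    calc (∏ i, v i / d) * d ^ k = ∏ i : Fin k, (v i / d * d) := by
          rw [Finset.prod_mul_distrib, Finset.prod_const, Finset.card_univ, Fintype.card_fin]
      _ = ∏ i, v i := Finset.prod_congr rfl fun i _ => Nat.div_mul_cancel (h3 i)
      _ ≤ N := h2
  · intro w hw
    rw [Finset.mem_coe, mem_Sfin] at hw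
    obtain ⟨h1, h2⟩ := hw
    simp only [Finset.mem_coe, mem_filter, mem_Sfin]
    refine ⟨⟨fun i => by nlinarith [h1 i], ?_⟩, fun i => Dvd.intro _ rfl⟩
    rw [Nat.le_div_iff_mul_le (by positivity)] at h2
    calc ∏ i, d * w i = (∏ i, w i) * d ^ k := by
          rw [Finset.prod_mul_distrib, Finset.prod_const, Finset.card_univ, Fintype.card_fin,
            mul_comm]
      _ ≤ N := h2
  · intro v hv
    simp only [Finset.mem_coe, mem_filter] at hv
    funext i
    exact Nat.mul_div_cancel' (hv.2 i)
  · intro w _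
    funext i
    exact Nat.mul_div_cancel_left _ (by omega)



lemma pow_sub_pow_upper {b c : ℝ} (hc : 0 ≤ c) (hcb : c ≤ b) (k : ℕ) :
    b ^ k - c ^ k ≤ k * ((b - c) * b ^ (k - 1)) := by
  have hb : 0 ≤ b := hc.trans hcb
  rw [← geom_sum₂_mul]
  have h1 : ∑ i ∈ Finset.range k, b ^ i * c ^ (k - 1 - i) ≤ (k : ℝ) * b ^ (k - 1) := by
    calc ∑ i ∈ Finset.range k, b ^ i * c ^ (k - 1 - i)
        ≤ ∑ i ∈ Finset.range k, b ^ (k - 1) := by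
          refine Finset.sum_le_sum fun i hi => ?_
          rw [Finset.mem_range] at hi
          calc b ^ i * c ^ (k - 1 - i) ≤ b ^ i * b ^ (k - 1 - i) := by
                exact mul_le_mul_of_nonneg_left (pow_le_pow_left₀ hc hcb _) (pow_nonneg hb i)
            _ = b ^ (k - 1) := by rw [← pow_add]; congr 1; omega
      _ = k * b ^ (k - 1) := by rw [Finset.sum_const, Finset.card_range, nsmul_eq_mul]
  calc (∑ i ∈ Finset.range k, b ^ i * c ^ (k - 1 - i)) * (b - c)
      ≤ (k * b ^ (k - 1)) * (b - c) :=
        mul_le_mul_of_nonneg_right h1 (sub_nonneg.mpr hcb)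
    _ = k * ((b - c) * b ^ (k - 1)) := by ring

lemma pow_sub_pow_lower {b c : ℝ} (hc : 0 ≤ c) (hcb : c ≤ b) (k : ℕ) :
    k * ((b - c) * c ^ (k - 1)) ≤ b ^ k - c ^ k := by
  have hb : 0 ≤ b := hc.trans hcb
  rw [← geom_sum₂_mul]
  have h1 : (k : ℝ) * c ^ (k - 1) ≤ ∑ i ∈ Finset.range k, b ^ i * c ^ (k - 1 - i) := by
    calc (k : ℝ) * c ^ (k - 1) = ∑ _i ∈ Finset.range k, c ^ (k - 1) := by
          rw [Finset.sum_const, Finset.card_range, nsmul_eq_mul]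
      _ ≤ ∑ i ∈ Finset.range k, b ^ i * c ^ (k - 1 - i) := by
          refine Finset.sum_le_sum fun i hi => ?_
          rw [Finset.mem_range] at hi
          calc c ^ (k - 1) = c ^ i * c ^ (k - 1 - i) := by rw [← pow_add]; congr 1; omega
            _ ≤ b ^ i * c ^ (k - 1 - i) :=
              mul_le_mul_of_nonneg_right (pow_le_pow_left₀ hc hcb _) (pow_nonneg hc _)
  calc (k : ℝ) * ((b - c) * c ^ (k - 1)) = ((k : ℝ) * c ^ (k - 1)) * (b - c) := by ring
    _ ≤ (∑ i ∈ Finset.range k, b ^ i * c ^ (k - 1 - i)) * (b - c) :=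
        mul_le_mul_of_nonneg_right h1 (sub_nonneg.mpr hcb)

/-- `1/(a+1) ≤ log (a+1) - log a` for `a ≥ 1`. -/
lemma one_div_le_log_sub {a : ℝ} (ha : 1 ≤ a) : 1 / (a + 1) ≤ Real.log (a + 1) - Real.log a := by
  have h0 : (0:ℝ) < a := by linarith
  have h1 : (0:ℝ) < a + 1 := by linarith
  have := Real.log_le_sub_one_of_pos (show (0:ℝ) < a / (a + 1) by positivity)
  rw [Real.log_div h0.ne' h1.ne'] at this
  have : Real.log a - Real.log (a+1) ≤ -(1/(a+1)) := by
    have hq : a / (a + 1) - 1 = -(1/(a+1)) := by field_simp; ring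
    linarith [hq ▸ this]
  linarith

lemma log_sub_log_le {a : ℝ} (ha : 1 ≤ a) : Real.log (a + 1) - Real.log a ≤ 1 / a := by
  have h0 : (0:ℝ) < a := by linarith
  have h1 : (0:ℝ) < a + 1 := by linarith
  have := Real.log_le_sub_one_of_pos (show (0:ℝ) < (a+1) / a by positivity)
  rw [Real.log_div h1.ne' h0.ne'] at this
  have hq : (a+1) / a - 1 = 1/a := by field_simp; ring
  linarith [hq ▸ this]



lemma telescope_Icc (F : ℕ → ℝ) {a N : ℕ} (h : a ≤ N) :
    ∑ d ∈ Finset.Icc (a + 1) N, (F (d - 1) - F d) = F a - F N := by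
  induction N, h using Nat.le_induction with
  | base => simp
  | succ N hN ih =>
    rw [Finset.sum_Icc_succ_top (by omega), ih]
    have : N + 1 - 1 = N := by omega
    rw [this]; ring

lemma sum_log_pow_div_le (j : ℕ) {y : ℝ} (hy : 1 ≤ y) :
    ∑ d ∈ Finset.Icc 1 ⌊y⌋₊, (1 / (d : ℝ)) * Real.log (y / d) ^ j
      ≤ Real.log y ^ (j + 1) / (j + 1) + Real.log y ^ j := by
  set N := ⌊y⌋₊ with hN
  have hy0 : (0:ℝ) < y := by linarith
  have hN1 : 1 ≤ N := Nat.le_floor (by exact_mod_cast hy)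
  have hNy : (N : ℝ) ≤ y := Nat.floor_le hy0.le
  set F : ℕ → ℝ := fun d => Real.log (y / d) ^ (j + 1) / (j + 1) with hF
  have hsplit : Finset.Icc 1 N = insert 1 (Finset.Icc 2 N) := by
    ext x; simp only [Finset.mem_Icc, Finset.mem_insert]; omega
  rw [hsplit, Finset.sum_insert (by simp)]
  have h1 : (1 / ((1:ℕ) : ℝ)) * Real.log (y / ((1:ℕ):ℝ)) ^ j = Real.log y ^ j := by
    norm_num
  rw [h1]
  have hmain : ∑ d ∈ Finset.Icc 2 N, (1 / (d : ℝ)) * Real.log (y / d) ^ j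
      ≤ Real.log y ^ (j + 1) / (j + 1) := by
    have hterm : ∀ d ∈ Finset.Icc 2 N, (1 / (d : ℝ)) * Real.log (y / d) ^ j
        ≤ F (d - 1) - F d := by
      intro d hd
      rw [Finset.mem_Icc] at hd
      have hd2 : (2:ℝ) ≤ (d:ℝ) := by exact_mod_cast hd.1
      have hdy : (d:ℝ) ≤ y := le_trans (by exact_mod_cast hd.2) hNy
      have hcast : ((d - 1 : ℕ) : ℝ) = (d:ℝ) - 1 := by
        have : 1 ≤ d := by omega
        push_cast [this]; ring
      set b := Real.log (y / ((d:ℝ) - 1)) with hb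
      set c := Real.log (y / (d:ℝ)) with hc
      have hd0 : (0:ℝ) < (d:ℝ) := by linarith
      have hd10 : (0:ℝ) < (d:ℝ) - 1 := by linarith
      have hc0 : 0 ≤ c := Real.log_nonneg ((le_div_iff₀ hd0).mpr (by linarith))
      have hcb : c ≤ b := by
        apply Real.log_le_log (by positivity)
        exact div_le_div_of_nonneg_left hy0.le hd10 (by linarith)
      have hbc : 1 / (d:ℝ) ≤ b - c := by
        have hb' : b = Real.log y - Real.log ((d:ℝ) - 1) := Real.log_div hy0.ne' hd10.ne'
        have hc' : c = Real.log y - Real.log (d:ℝ) := Real.log_div hy0.ne' hd0.ne'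
        have := one_div_le_log_sub (a := (d:ℝ) - 1) (by linarith)
        have he : (d:ℝ) - 1 + 1 = (d:ℝ) := by ring
        rw [he] at this
        linarith
      have hpow := pow_sub_pow_lower hc0 hcb (j + 1)
      have hj : (j + 1 : ℕ) - 1 = j := by omega
      rw [hj] at hpow
      have hFd : F (d - 1) - F d = (b ^ (j+1) - c ^ (j+1)) / (j + 1) := by
        rw [hF]; simp only [hcast]; rw [hb, hc]; ring
      rw [hFd]
      have hjpos : (0:ℝ) < (j:ℝ) + 1 := by positivity
      rw [le_div_iff₀ hjpos]
      calc (1 / (d:ℝ)) * c ^ j * ((j:ℝ) + 1) = ((j:ℝ)+1) * ((1/(d:ℝ)) * c ^ j) := by ring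
        _ ≤ ((j:ℝ)+1) * ((b - c) * c ^ j) := by
            apply mul_le_mul_of_nonneg_left _ (by positivity)
            exact mul_le_mul_of_nonneg_right hbc (pow_nonneg hc0 j)
        _ ≤ b ^ (j+1) - c ^ (j+1) := by exact_mod_cast hpow
    calc ∑ d ∈ Finset.Icc 2 N, (1 / (d : ℝ)) * Real.log (y / d) ^ j
        ≤ ∑ d ∈ Finset.Icc 2 N, (F (d - 1) - F d) := Finset.sum_le_sum hterm
      _ = F 1 - F N := telescope_Icc F (by omega)
      _ ≤ Real.log y ^ (j + 1) / (j + 1) := by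
          have hF1 : F 1 = Real.log y ^ (j + 1) / (j + 1) := by
            rw [hF]; norm_num
          have hFN : 0 ≤ F N := by
            rw [hF]
            apply div_nonneg _ (by positivity)
            apply pow_nonneg
            apply Real.log_nonneg
            rw [le_div_iff₀ (by exact_mod_cast hN1 : (0:ℝ) < (N:ℝ))]
            linarith
          linarith
  linarith

lemma sum_log_pow_div_ge (j : ℕ) {y : ℝ} (hy : 2 ≤ y) :
    (Real.log y ^ (j + 1) - 1) / (j + 1)
      ≤ ∑ d ∈ Finset.Icc 1 ⌊y⌋₊, (1 / (d : ℝ)) * Real.log (y / d) ^ j := by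
  set N := ⌊y⌋₊ with hN
  have hy0 : (0:ℝ) < y := by linarith
  have hN2 : 2 ≤ N := Nat.le_floor (by exact_mod_cast hy)
  have hNy : (N : ℝ) ≤ y := Nat.floor_le hy0.le
  have hyN : y ≤ 2 * N := by
    have := Nat.lt_floor_add_one y
    have hN2' : (2:ℝ) ≤ (N:ℝ) := by exact_mod_cast hN2
    rw [← hN] at this
    linarith
  set F : ℕ → ℝ := fun d => Real.log (y / d) ^ (j + 1) / (j + 1) with hF
  have hterm : ∀ d ∈ Finset.Icc 1 (N - 1), F d - F (d + 1)
      ≤ (1 / (d : ℝ)) * Real.log (y / d) ^ j := by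
    intro d hd
    rw [Finset.mem_Icc] at hd
    have hd1 : (1:ℝ) ≤ (d:ℝ) := by exact_mod_cast hd.1
    have hdy : (d:ℝ) + 1 ≤ y := by
      have : (d:ℝ) + 1 ≤ (N:ℝ) := by
        have : d + 1 ≤ N := by omega
        exact_mod_cast this
      linarith
    set b := Real.log (y / (d:ℝ)) with hb
    set c := Real.log (y / ((d:ℝ) + 1)) with hc
    have hd0 : (0:ℝ) < (d:ℝ) := by linarith
    have hd10 : (0:ℝ) < (d:ℝ) + 1 := by linarith
    have hc0 : 0 ≤ c := Real.log_nonneg ((le_div_iff₀ hd10).mpr (by linarith))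
    have hcb : c ≤ b := by
      apply Real.log_le_log (by positivity)
      exact div_le_div_of_nonneg_left hy0.le hd0 (by linarith)
    have hbc : b - c ≤ 1 / (d:ℝ) := by
      have hb' : b = Real.log y - Real.log (d:ℝ) := Real.log_div hy0.ne' hd0.ne'
      have hc' : c = Real.log y - Real.log ((d:ℝ) + 1) := Real.log_div hy0.ne' hd10.ne'
      have := log_sub_log_le (a := (d:ℝ)) hd1
      linarith
    have hpow := pow_sub_pow_upper hc0 hcb (j + 1)
    have hj : (j + 1 : ℕ) - 1 = j := by omega
    rw [hj] at hpow
    have hFd : F d - F (d + 1) = (b ^ (j+1) - c ^ (j+1)) / (j + 1) := by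
      rw [hF]; push_cast; rw [hb, hc]; ring
    rw [hFd]
    have hjpos : (0:ℝ) < (j:ℝ) + 1 := by positivity
    rw [div_le_iff₀ hjpos]
    calc b ^ (j+1) - c ^ (j+1) ≤ ((j:ℝ)+1) * ((b - c) * b ^ j) := by exact_mod_cast hpow
      _ ≤ ((j:ℝ)+1) * ((1/(d:ℝ)) * b ^ j) := by
          apply mul_le_mul_of_nonneg_left _ (by positivity)
          exact mul_le_mul_of_nonneg_right hbc (pow_nonneg (hc0.trans hcb) j)
      _ = (1 / (d:ℝ)) * b ^ j * ((j:ℝ) + 1) := by ring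
  have htel : ∑ d ∈ Finset.Icc 1 (N - 1), (F d - F (d + 1)) = F 1 - F N := by
    have h2 : ∑ d ∈ Finset.Icc 1 (N - 1), (F d - F (d + 1))
        = ∑ d ∈ Finset.Icc (0 + 1) (N - 1), (F (d - 1 + 1) - F (d + 1)) := by
      apply Finset.sum_congr (by norm_num)
      intro d hd
      rw [Finset.mem_Icc] at hd
      congr 3
      omega
    rw [h2, telescope_Icc (fun d => F (d + 1)) (by omega)]
    rw [show N - 1 + 1 = N from by omega]
  have hsub : ∑ d ∈ Finset.Icc 1 (N - 1), (1 / (d : ℝ)) * Real.log (y / d) ^ j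
      ≤ ∑ d ∈ Finset.Icc 1 N, (1 / (d : ℝ)) * Real.log (y / d) ^ j := by
    apply Finset.sum_le_sum_of_subset_of_nonneg
    · apply Finset.Icc_subset_Icc_right; omega
    · intro d hd _
      rw [Finset.mem_Icc] at hd
      have hd0 : (0:ℝ) < (d:ℝ) := by exact_mod_cast hd.1
      have hdy : (d:ℝ) ≤ y := le_trans (by exact_mod_cast hd.2) hNy
      apply mul_nonneg (by positivity)
      exact pow_nonneg (Real.log_nonneg ((le_div_iff₀ hd0).mpr (by linarith))) j
  have hF1 : F 1 = Real.log y ^ (j + 1) / (j + 1) := by rw [hF]; norm_num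
  have hFN : F N ≤ 1 / (j + 1) := by
    rw [hF]
    apply div_le_div_of_nonneg_right _ (by positivity)
    · apply pow_le_one₀
      · apply Real.log_nonneg
        rw [le_div_iff₀ (by positivity : (0:ℝ) < (N:ℝ))]
        linarith
      · calc Real.log (y / N) ≤ Real.log 2 := by
              apply Real.log_le_log (by positivity)
              rw [div_le_iff₀ (by positivity : (0:ℝ) < (N:ℝ))]
              linarith
          _ ≤ 1 := by
              have := Real.log_two_lt_d9
              linarith
    
  calc (Real.log y ^ (j + 1) - 1) / (j + 1) ≤ F 1 - F N := by
        rw [hF1]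
        have : (Real.log y ^ (j + 1) - 1) / ((j:ℝ) + 1)
            = Real.log y ^ (j+1) / ((j:ℝ)+1) - 1 / ((j:ℝ)+1) := by ring
        rw [this]
        push_cast
        linarith
    _ = ∑ d ∈ Finset.Icc 1 (N - 1), (F d - F (d + 1)) := htel.symm
    _ ≤ ∑ d ∈ Finset.Icc 1 (N - 1), (1 / (d : ℝ)) * Real.log (y / d) ^ j :=
        Finset.sum_le_sum hterm
    _ ≤ _ := hsub

lemma sum_Ioc_one_div_le {a N : ℕ} (ha : 1 ≤ a) (haN : a ≤ N) :
    ∑ d ∈ Finset.Ioc a N, (1:ℝ) / d ≤ Real.log N - Real.log a := by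
  have : Finset.Ioc a N = Finset.Icc (a + 1) N := by
    ext x; simp only [Finset.mem_Ioc, Finset.mem_Icc]; omega
  rw [this]
  set F : ℕ → ℝ := fun d => -Real.log d with hF
  calc ∑ d ∈ Finset.Icc (a+1) N, (1:ℝ)/d ≤ ∑ d ∈ Finset.Icc (a+1) N, (F (d-1) - F d) := by
        apply Finset.sum_le_sum
        intro d hd
        rw [Finset.mem_Icc] at hd
        have hd2 : (2:ℝ) ≤ (d:ℝ) := by exact_mod_cast (by omega : 2 ≤ d)
        have hcast : ((d - 1 : ℕ) : ℝ) = (d:ℝ) - 1 := by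
          have : 1 ≤ d := by omega
          push_cast [this]; ring
        have := one_div_le_log_sub (a := (d:ℝ) - 1) (by linarith)
        have he : (d:ℝ) - 1 + 1 = (d:ℝ) := by ring
        rw [he] at this
        simp only [hF, hcast]
        linarith
    _ = F a - F N := telescope_Icc F haN
    _ = Real.log N - Real.log a := by rw [hF]; ring



lemma A_le {k : ℕ} (hk : 1 ≤ k) : ∀ N : ℕ, 1 ≤ N →
    (A k N : ℝ) ≤ N * (1 + Real.log N) ^ (k - 1) := by
  induction k, hk using Nat.le_induction with
  | base => intro N _; rw [A_one]; simp
  | succ k hk ih =>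
    intro N hN
    have hN0 : (0:ℝ) < N := by exact_mod_cast hN
    have hN1 : (1:ℝ) ≤ N := by exact_mod_cast hN
    have hlogN : 0 ≤ Real.log N := Real.log_nonneg hN1
    rw [A_succ]
    push_cast
    have hterm : ∀ d ∈ Icc 1 N, (A k (N / d) : ℝ) ≤ ((N:ℝ)/d) * (1 + Real.log N) ^ (k - 1) := by
      intro d hd
      rw [mem_Icc] at hd
      have hd0 : (0:ℝ) < d := by exact_mod_cast hd.1
      have hm1 : 1 ≤ N / d := Nat.one_le_div_iff (by omega) |>.mpr hd.2
      have hmN : N / d ≤ N := Nat.div_le_self N d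
      have hm1' : (1:ℝ) ≤ (N/d : ℕ) := by exact_mod_cast hm1
      have h1 : (A k (N/d) : ℝ) ≤ (N/d : ℕ) * (1 + Real.log (N/d : ℕ)) ^ (k - 1) := ih _ hm1
      have h2 : (0:ℝ) ≤ 1 + Real.log (N/d : ℕ) := by
        have := Real.log_nonneg hm1'
        linarith
      have h3 : (1 + Real.log (N/d : ℕ)) ^ (k-1) ≤ (1 + Real.log N) ^ (k-1) := by
        apply pow_le_pow_left₀ h2
        have : Real.log (N/d : ℕ) ≤ Real.log N :=
          Real.log_le_log (by linarith) (by exact_mod_cast hmN)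
        linarith
      have h4 : ((N/d : ℕ) : ℝ) ≤ (N:ℝ)/d := Nat.cast_div_le
      calc (A k (N/d) : ℝ) ≤ (N/d : ℕ) * (1 + Real.log (N/d : ℕ)) ^ (k - 1) := h1
        _ ≤ ((N:ℝ)/d) * (1 + Real.log N) ^ (k - 1) := by
            apply mul_le_mul h4 h3 (by positivity) (by positivity)
    calc ∑ d ∈ Icc 1 N, (A k (N / d) : ℝ)
        ≤ ∑ d ∈ Icc 1 N, ((N:ℝ)/d) * (1 + Real.log N) ^ (k - 1) := Finset.sum_le_sum hterm
      _ = (N * (1 + Real.log N) ^ (k - 1)) * ∑ d ∈ Icc 1 N, (1/(d:ℝ)) := by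
          rw [Finset.mul_sum]
          apply Finset.sum_congr rfl
          intro d _
          ring
      _ ≤ (N * (1 + Real.log N) ^ (k - 1)) * (1 + Real.log N) := by
          apply mul_le_mul_of_nonneg_left _ (by positivity)
          have := sum_log_pow_div_le 0 (y := (N:ℝ)) hN1
          simp only [pow_zero, pow_one, mul_one, Nat.floor_natCast] at this
          linarith
      _ = N * (1 + Real.log N) ^ (k + 1 - 1) := by
          rw [show k + 1 - 1 = (k-1) + 1 from by omega, pow_succ]
          ring

lemma A_floor_le {k : ℕ} (hk : 1 ≤ k) {z : ℝ} (hz : 1 ≤ z) :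
    (A k ⌊z⌋₊ : ℝ) ≤ z * (1 + Real.log z) ^ (k - 1) := by
  have hz0 : (0:ℝ) < z := by linarith
  have hN1 : 1 ≤ ⌊z⌋₊ := Nat.le_floor (by exact_mod_cast hz)
  have hN1' : (1:ℝ) ≤ (⌊z⌋₊:ℝ) := by exact_mod_cast hN1
  have hNz : (⌊z⌋₊ : ℝ) ≤ z := Nat.floor_le hz0.le
  calc (A k ⌊z⌋₊ : ℝ) ≤ (⌊z⌋₊:ℝ) * (1 + Real.log ⌊z⌋₊) ^ (k - 1) := A_le hk _ hN1
    _ ≤ z * (1 + Real.log z) ^ (k - 1) := by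
        apply mul_le_mul hNz _ (by positivity) (by positivity)
        apply pow_le_pow_left₀
        · have := Real.log_nonneg hN1'
          linarith
        · have : Real.log (⌊z⌋₊:ℝ) ≤ Real.log z := Real.log_le_log (by linarith) hNz
          linarith

set_option maxHeartbeats 1000000 in
lemma Qaux (j : ℕ) : ∀ ε : ℝ, 0 < ε → ∃ Y : ℝ, 2 ≤ Y ∧ ∀ y : ℝ, Y ≤ y →
    |(A (j + 1) ⌊y⌋₊ : ℝ) - y * Real.log y ^ j / (Nat.factorial j)|
      ≤ ε * (y * Real.log y ^ j) := by
  induction j with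
  | zero =>
    intro ε hε
    refine ⟨max 2 (1/ε), le_max_left _ _, fun y hy => ?_⟩
    have hy2 : (2:ℝ) ≤ y := le_trans (le_max_left _ _) hy
    have hyε : 1/ε ≤ y := le_trans (le_max_right _ _) hy
    have hy0 : (0:ℝ) < y := by linarith
    have h1 : 1 ≤ ε * y := by
      rw [← div_le_iff₀' hε]
      exact hyε
    have hfl : (⌊y⌋₊ : ℝ) ≤ y := Nat.floor_le hy0.le
    have hfl2 : y < (⌊y⌋₊ : ℝ) + 1 := Nat.lt_floor_add_one y
    simp only [zero_add, A_one, pow_zero, Nat.factorial_zero, Nat.cast_one, mul_one, div_one]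
    rw [abs_le]
    constructor <;> nlinarith
  | succ j ih =>
    intro ε hε
    obtain ⟨T, hT2, hQ⟩ := ih (ε/4) (by positivity)
    have hT0 : (0:ℝ) < T := by linarith
    have hT1 : (1:ℝ) ≤ T := by linarith
    have hlogT : 0 ≤ Real.log T := Real.log_nonneg hT1
    have hlog2T : 0 ≤ Real.log (2*T) := Real.log_nonneg (by linarith)
    set C : ℝ := 2 * (1 + Real.log T)^j * Real.log (2*T) with hC
    have hC0 : 0 ≤ C := by positivity
    refine ⟨max (max (2*T) (Real.exp 1)) (Real.exp (2*(2+C)/ε)), ?_, fun y hy => ?_⟩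
    · calc (2:ℝ) ≤ 2*T := by linarith
        _ ≤ _ := le_trans (le_max_left _ _) (le_max_left _ _)
    have hy2T : 2*T ≤ y := le_trans (le_trans (le_max_left _ _) (le_max_left _ _)) hy
    have hy4 : 4 ≤ y := by linarith
    have hy0 : (0:ℝ) < y := by linarith
    have hy1 : (1:ℝ) ≤ y := by linarith
    have hy2 : (2:ℝ) ≤ y := by linarith
    have hlog1 : 1 ≤ Real.log y := by
      rw [← Real.log_exp 1]
      exact Real.log_le_log (Real.exp_pos 1) (le_trans (le_trans (le_max_right _ _) (le_max_left _ _)) hy)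
    have hlogC : 2*(2+C)/ε ≤ Real.log y := by
      rw [← Real.log_exp (2*(2+C)/ε)]
      exact Real.log_le_log (Real.exp_pos _) (le_trans (le_max_right _ _) hy)
    have hlogy0 : 0 < Real.log y := by linarith
    set N := ⌊y⌋₊ with hNdef
    have hN1 : 1 ≤ N := Nat.le_floor (by exact_mod_cast hy1)
    have hNy : (N:ℝ) ≤ y := Nat.floor_le hy0.le
    have hNy1 : y < (N:ℝ) + 1 := Nat.lt_floor_add_one y
    have hN0 : (0:ℝ) < N := by exact_mod_cast hN1
    set a := ⌊y/T⌋₊ with hadef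
    have hyT2 : (2:ℝ) ≤ y/T := by
      rw [le_div_iff₀ hT0]; linarith
    have ha1 : 1 ≤ a := Nat.le_floor (by exact_mod_cast (by linarith : (1:ℝ) ≤ y/T))
    have ha0 : (0:ℝ) < a := by exact_mod_cast ha1
    have haN : a ≤ N := Nat.floor_le_floor (div_le_self hy0.le hT1)
    have hay : (a:ℝ) ≤ y/T := Nat.floor_le (by positivity)
    have hay1 : y/T < (a:ℝ) + 1 := Nat.lt_floor_add_one _
    have haLB : y/(2*T) ≤ (a:ℝ) := by
      rw [div_le_iff₀ (by positivity : (0:ℝ) < 2*T)]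
      have h5 : y < T * ((a:ℝ)+1) := by
        rw [div_lt_iff₀ hT0] at hay1; linarith
      have ha1' : (1:ℝ) ≤ (a:ℝ) := by exact_mod_cast ha1
      nlinarith
    -- the pieces
    set t : ℕ → ℝ := fun d => (A (j+1) ⌊y/(d:ℝ)⌋₊ : ℝ) with ht
    set s : ℕ → ℝ := fun d => y/(d:ℝ) * Real.log (y/(d:ℝ)) ^ j / (Nat.factorial j) with hs
    have hsum : (A (j+2) N : ℝ) = ∑ d ∈ Icc 1 N, t d := by
      rw [A_succ]
      push_cast
      refine Finset.sum_congr rfl fun d _ => ?_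
      rw [ht]
      simp only
      rw [Nat.floor_div_natCast]
    set S₁ : ℝ := ∑ d ∈ Icc 1 N, (1/(d:ℝ)) * Real.log (y/(d:ℝ)) ^ j with hS₁
    have hS₁nonneg : ∀ d ∈ Icc 1 N, 0 ≤ (1/(d:ℝ)) * Real.log (y/(d:ℝ)) ^ j := by
      intro d hd
      rw [mem_Icc] at hd
      have hd0 : (0:ℝ) < d := by exact_mod_cast hd.1
      have hdy : (d:ℝ) ≤ y := le_trans (by exact_mod_cast hd.2) hNy
      have : 0 ≤ Real.log (y/(d:ℝ)) := Real.log_nonneg ((le_div_iff₀ hd0).mpr (by linarith))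
      positivity
    have hfact0 : (0:ℝ) < (Nat.factorial j : ℝ) := by exact_mod_cast j.factorial_pos
    have hfact1 : (1:ℝ) ≤ (Nat.factorial j : ℝ) := by exact_mod_cast j.factorial_pos
    -- error term bounds
    have hEnear : ∀ d ∈ Icc 1 a, |t d - s d| ≤ (ε/4) * (y * ((1/(d:ℝ)) * Real.log (y/(d:ℝ)) ^ j)) := by
      intro d hd
      rw [mem_Icc] at hd
      have hd0 : (0:ℝ) < d := by exact_mod_cast hd.1
      have hda : (d:ℝ) ≤ a := by exact_mod_cast hd.2
      have hTyd : T ≤ y/(d:ℝ) := by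
        rw [le_div_iff₀ hd0]
        calc T * d ≤ T * (y/T) := by
              apply mul_le_mul_of_nonneg_left _ hT0.le
              linarith
          _ = y := by field_simp
      have h6 := hQ (y/(d:ℝ)) hTyd
      simp only [ht, hs]
      calc |(A (j+1) ⌊y/(d:ℝ)⌋₊ : ℝ) - y/(d:ℝ) * Real.log (y/(d:ℝ)) ^ j / (Nat.factorial j)|
          ≤ (ε/4) * (y/(d:ℝ) * Real.log (y/(d:ℝ)) ^ j) := h6
        _ = (ε/4) * (y * ((1/(d:ℝ)) * Real.log (y/(d:ℝ)) ^ j)) := by ring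
    have hEfar : ∀ d ∈ Ioc a N, |t d - s d| ≤ 2 * (1 + Real.log T)^j * (y * (1/(d:ℝ))) := by
      intro d hd
      rw [mem_Ioc] at hd
      have hd1 : 1 ≤ d := by omega
      have hd0 : (0:ℝ) < d := by exact_mod_cast hd1
      have hda : (a:ℝ) + 1 ≤ (d:ℝ) := by exact_mod_cast hd.1
      have hdN : (d:ℝ) ≤ N := by exact_mod_cast hd.2
      have hz1 : 1 ≤ y/(d:ℝ) := by
        rw [le_div_iff₀ hd0]; simpa using le_trans hdN hNy
      have hz0 : (0:ℝ) < y/(d:ℝ) := by linarith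
      have hlogz0 : 0 ≤ Real.log (y/(d:ℝ)) := Real.log_nonneg hz1
      have hzT : y/(d:ℝ) ≤ T := by
        rw [div_le_iff₀ hd0]
        have h5 : y < T * ((a:ℝ)+1) := by
          rw [div_lt_iff₀ hT0] at hay1; linarith
        nlinarith
      have hlogzT : Real.log (y/(d:ℝ)) ≤ Real.log T := Real.log_le_log hz0 hzT
      have hP0 : (0:ℝ) ≤ (1 + Real.log T)^j := by positivity
      simp only [ht, hs]
      have hb1 : (A (j+1) ⌊y/(d:ℝ)⌋₊ : ℝ) ≤ (y/(d:ℝ)) * (1 + Real.log T)^j := by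
        calc (A (j+1) ⌊y/(d:ℝ)⌋₊ : ℝ)
            ≤ (y/(d:ℝ)) * (1 + Real.log (y/(d:ℝ))) ^ (j+1-1) := A_floor_le (by omega) hz1
          _ = (y/(d:ℝ)) * (1 + Real.log (y/(d:ℝ))) ^ j := by norm_num
          _ ≤ (y/(d:ℝ)) * (1 + Real.log T)^j :=
              mul_le_mul_of_nonneg_left (pow_le_pow_left₀ (by linarith) (by linarith) j) hz0.le
      have hb0 : (0:ℝ) ≤ (A (j+1) ⌊y/(d:ℝ)⌋₊ : ℝ) := by positivity
      have hb2 : (0:ℝ) ≤ y/(d:ℝ) * Real.log (y/(d:ℝ)) ^ j / (Nat.factorial j) :=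
        div_nonneg (mul_nonneg hz0.le (pow_nonneg hlogz0 j)) hfact0.le
      have hb3 : y/(d:ℝ) * Real.log (y/(d:ℝ)) ^ j / (Nat.factorial j)
          ≤ (y/(d:ℝ)) * (1 + Real.log T)^j := by
        rw [div_le_iff₀ hfact0]
        calc y/(d:ℝ) * Real.log (y/(d:ℝ)) ^ j ≤ (y/(d:ℝ)) * (1 + Real.log T)^j :=
              mul_le_mul_of_nonneg_left (pow_le_pow_left₀ hlogz0 (by linarith) j) hz0.le
          _ ≤ (y/(d:ℝ)) * (1 + Real.log T)^j * (Nat.factorial j) :=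
              le_mul_of_one_le_right (mul_nonneg hz0.le hP0) hfact1
      have habs : |(A (j+1) ⌊y/(d:ℝ)⌋₊ : ℝ) - y/(d:ℝ) * Real.log (y/(d:ℝ)) ^ j / (Nat.factorial j)|
          ≤ (y/(d:ℝ)) * (1 + Real.log T)^j + (y/(d:ℝ)) * (1 + Real.log T)^j := by
        have hBB : (0:ℝ) ≤ (y/(d:ℝ)) * (1 + Real.log T)^j := mul_nonneg hz0.le hP0
        rw [abs_le]; constructor <;> linarith [hb0, hb1, hb2, hb3]
      calc |(A (j+1) ⌊y/(d:ℝ)⌋₊ : ℝ) - y/(d:ℝ) * Real.log (y/(d:ℝ)) ^ j / (Nat.factorial j)|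
          ≤ (y/(d:ℝ)) * (1 + Real.log T)^j + (y/(d:ℝ)) * (1 + Real.log T)^j := habs
        _ = 2 * (1 + Real.log T)^j * (y * (1/(d:ℝ))) := by ring
    -- sums of error pieces
    have hIccIoc : Finset.Icc 1 N = Finset.Ioc 0 N := by
      ext x; simp only [Finset.mem_Icc, Finset.mem_Ioc]; omega
    have hIccIoc' : Finset.Icc 1 a = Finset.Ioc 0 a := by
      ext x; simp only [Finset.mem_Icc, Finset.mem_Ioc]; omega
    have hsplit : ∑ d ∈ Icc 1 N, (t d - s d)
        = ∑ d ∈ Icc 1 a, (t d - s d) + ∑ d ∈ Ioc a N, (t d - s d) := by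
      rw [hIccIoc, hIccIoc']
      exact (Finset.sum_Ioc_consecutive _ (by omega) haN).symm
    have hS₁le : S₁ ≤ Real.log y ^ (j+1) / (j+1) + Real.log y ^ j := sum_log_pow_div_le j hy1
    have hS₁ge : (Real.log y ^ (j+1) - 1) / (j+1) ≤ S₁ := sum_log_pow_div_ge j hy2
    have hpowj : Real.log y ^ j ≤ Real.log y ^ (j+1) := by
      calc Real.log y ^ j = Real.log y ^ j * 1 := by ring
        _ ≤ Real.log y ^ j * Real.log y := by
            apply mul_le_mul_of_nonneg_left hlog1 (by positivity)
        _ = Real.log y ^ (j+1) := by rw [pow_succ]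
    have hE1 : |∑ d ∈ Icc 1 a, (t d - s d)| ≤ (ε/2) * (y * Real.log y ^ (j+1)) := by
      calc |∑ d ∈ Icc 1 a, (t d - s d)| ≤ ∑ d ∈ Icc 1 a, |t d - s d| :=
            Finset.abs_sum_le_sum_abs _ _
        _ ≤ ∑ d ∈ Icc 1 a, (ε/4) * (y * ((1/(d:ℝ)) * Real.log (y/(d:ℝ)) ^ j)) :=
            Finset.sum_le_sum hEnear
        _ ≤ ∑ d ∈ Icc 1 N, (ε/4) * (y * ((1/(d:ℝ)) * Real.log (y/(d:ℝ)) ^ j)) := by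
            apply Finset.sum_le_sum_of_subset_of_nonneg (Finset.Icc_subset_Icc_right haN)
            intro d hd _
            have := hS₁nonneg d hd
            positivity
        _ = (ε/4) * y * S₁ := by rw [hS₁, Finset.mul_sum]; apply Finset.sum_congr rfl; intros; ring
        _ ≤ (ε/4) * y * (Real.log y ^ (j+1) / (j+1) + Real.log y ^ j) := by
            apply mul_le_mul_of_nonneg_left hS₁le (by positivity)
        _ ≤ (ε/2) * (y * Real.log y ^ (j+1)) := by
            have h1 : Real.log y ^ (j+1) / ((j:ℝ)+1) ≤ Real.log y ^ (j+1) := by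
              apply div_le_self (by positivity)
              linarith [Nat.cast_nonneg (α := ℝ) j]
            have h2 : Real.log y ^ (j+1) / ((j:ℝ)+1) + Real.log y ^ j
                ≤ 2 * Real.log y ^ (j+1) := by linarith [hpowj]
            calc (ε/4) * y * (Real.log y ^ (j+1) / ((j:ℝ)+1) + Real.log y ^ j)
                ≤ (ε/4) * y * (2 * Real.log y ^ (j+1)) :=
                  mul_le_mul_of_nonneg_left h2 (by positivity)
              _ = (ε/2) * (y * Real.log y ^ (j+1)) := by ring
    have hE2 : |∑ d ∈ Ioc a N, (t d - s d)| ≤ C * y := by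
      calc |∑ d ∈ Ioc a N, (t d - s d)| ≤ ∑ d ∈ Ioc a N, |t d - s d| :=
            Finset.abs_sum_le_sum_abs _ _
        _ ≤ ∑ d ∈ Ioc a N, 2 * (1 + Real.log T)^j * (y * (1/(d:ℝ))) :=
            Finset.sum_le_sum hEfar
        _ = 2 * (1 + Real.log T)^j * y * ∑ d ∈ Ioc a N, (1:ℝ)/(d:ℝ) := by
            rw [Finset.mul_sum]; apply Finset.sum_congr rfl; intros; ring
        _ ≤ 2 * (1 + Real.log T)^j * y * (Real.log N - Real.log a) := by
            apply mul_le_mul_of_nonneg_left (sum_Ioc_one_div_le ha1 haN) (by positivity)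
        _ ≤ 2 * (1 + Real.log T)^j * y * Real.log (2*T) := by
            apply mul_le_mul_of_nonneg_left _ (by positivity)
            have h1 : Real.log (N:ℝ) ≤ Real.log y := Real.log_le_log hN0 hNy
            have h2 : Real.log (y/(2*T)) ≤ Real.log (a:ℝ) :=
              Real.log_le_log (by positivity) haLB
            have h3 : Real.log (y/(2*T)) = Real.log y - Real.log (2*T) :=
              Real.log_div hy0.ne' (by positivity)
            linarith
        _ = C * y := by rw [hC]; ring
    -- main term
    have hsums : ∑ d ∈ Icc 1 N, s d = y * S₁ / (Nat.factorial j) := by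
      rw [hS₁, Finset.mul_sum, Finset.sum_div]
      apply Finset.sum_congr rfl
      intro d _
      simp only [hs]
      ring
    set L : ℝ := Real.log y ^ (j+1) with hL
    have hL0 : 0 < L := by rw [hL]; positivity
    have hLlog : Real.log y ≤ L := by
      rw [hL]
      calc Real.log y = Real.log y ^ 1 := (pow_one _).symm
        _ ≤ Real.log y ^ (j+1) := pow_le_pow_right₀ hlog1 (by omega)
    have hM : |∑ d ∈ Icc 1 N, s d - y * L / (Nat.factorial (j+1))|
        ≤ (2 / Real.log y) * (y * L) := by
      rw [hsums]
      have hfs : (Nat.factorial (j+1) : ℝ) = ((j:ℝ)+1) * (Nat.factorial j) := by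
        rw [Nat.factorial_succ]; push_cast; ring
      have hj10 : (0:ℝ) < (j:ℝ) + 1 := by positivity
      have key : y * S₁ / (Nat.factorial j) - y * L / (Nat.factorial (j+1))
          = (y / (Nat.factorial j)) * (S₁ - L / ((j:ℝ)+1)) := by
        rw [hfs]; field_simp
      rw [key]
      have hup : S₁ - L / ((j:ℝ)+1) ≤ Real.log y ^ j := by
        have h := hS₁le
        rw [hL]
        push_cast at h ⊢
        linarith
      have h3 : (0:ℝ) ≤ Real.log y ^ j := by positivity
      have hdown : -(Real.log y ^ j + 1) ≤ S₁ - L / ((j:ℝ)+1) := by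
        have h1 := hS₁ge
        push_cast at h1
        have h2 : (Real.log y ^ (j+1) - 1) / ((j:ℝ)+1)
            = Real.log y ^ (j+1)/((j:ℝ)+1) - 1/((j:ℝ)+1) := by ring
        have h4 : 1/((j:ℝ)+1) ≤ 1 := by
          rw [div_le_one hj10]; linarith [Nat.cast_nonneg (α := ℝ) j]
        rw [hL]
        linarith
      have habs : |S₁ - L/((j:ℝ)+1)| ≤ Real.log y ^ j + 1 := by
        rw [abs_le]; exact ⟨hdown, by linarith⟩
      rw [abs_mul, abs_of_nonneg (show (0:ℝ) ≤ y / (Nat.factorial j) by positivity)]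
      have honele : (1:ℝ) ≤ Real.log y ^ j := one_le_pow₀ hlog1
      have hLeq : Real.log y ^ j * Real.log y = L := by rw [hL, pow_succ]
      calc y / (Nat.factorial j) * |S₁ - L/((j:ℝ)+1)|
          ≤ y / (Nat.factorial j) * (Real.log y ^ j + 1) := by
            apply mul_le_mul_of_nonneg_left habs (by positivity)
        _ ≤ y * (Real.log y ^ j + 1) := by
            apply mul_le_mul_of_nonneg_right _ (by positivity)
            rw [div_le_iff₀ hfact0]
            nlinarith
        _ ≤ y * (2 * Real.log y ^ j) := by nlinarith
        _ = (2 / Real.log y) * (y * (Real.log y ^ j * Real.log y)) := by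
            field_simp
        _ = (2 / Real.log y) * (y * L) := by rw [hLeq]
    have hfinal : (A (j+1+1) N : ℝ) - y * L / (Nat.factorial (j+1))
        = (∑ d ∈ Icc 1 a, (t d - s d) + ∑ d ∈ Ioc a N, (t d - s d))
          + (∑ d ∈ Icc 1 N, s d - y * L / (Nat.factorial (j+1))) := by
      rw [← hsplit, Finset.sum_sub_distrib, ← hsum]
      ring
    have hgoal : |(A (j+1+1) N : ℝ) - y * L / (Nat.factorial (j+1))|
        ≤ ε * (y * L) := by
      rw [hfinal]
      have hCy : C * y ≤ (C / Real.log y) * (y * L) := by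
        rw [div_mul_eq_mul_div, le_div_iff₀ hlogy0]
        calc C * y * Real.log y = C * (y * Real.log y) := by ring
          _ ≤ C * (y * L) :=
              mul_le_mul_of_nonneg_left (mul_le_mul_of_nonneg_left hLlog hy0.le) hC0
      have hcoef : (C + 2) / Real.log y ≤ ε / 2 := by
        rw [div_le_iff₀ hlogy0]
        rw [div_le_iff₀ hε] at hlogC
        linarith
      calc |_ + _ + _| ≤ |∑ d ∈ Icc 1 a, (t d - s d)| + |∑ d ∈ Ioc a N, (t d - s d)|
            + |∑ d ∈ Icc 1 N, s d - y * L / (Nat.factorial (j+1))| := by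
            apply le_trans (abs_add_le _ _)
            apply add_le_add_left (abs_add_le _ _)
        _ ≤ (ε/2) * (y * L) + C * y + (2 / Real.log y) * (y * L) := by
            refine add_le_add (add_le_add hE1 hE2) hM
        _ ≤ (ε/2) * (y * L) + (C / Real.log y) * (y * L) + (2 / Real.log y) * (y * L) := by
            linarith
        _ = (ε/2) * (y * L) + ((C+2) / Real.log y) * (y * L) := by ring
        _ ≤ (ε/2) * (y * L) + (ε/2) * (y * L) := by
            apply add_le_add_right
            apply mul_le_mul_of_nonneg_right hcoef (by positivity)
        _ = ε * (y * L) := by ring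
    exact hgoal


-- === limits layer ===

lemma tendsto_A {k : ℕ} (hk : 1 ≤ k) :
    Tendsto (fun y : ℝ => (A k ⌊y⌋₊ : ℝ) / (y * Real.log y ^ (k - 1))) atTop
      (nhds (1 / (Nat.factorial (k - 1)))) := by
  obtain ⟨j, rfl⟩ : ∃ j, k = j + 1 := ⟨k - 1, by omega⟩
  have hj : j + 1 - 1 = j := rfl
  rw [hj]
  rw [Metric.tendsto_atTop]
  intro ε hε
  obtain ⟨Y, hY2, hQ⟩ := Qaux j (ε/2) (by positivity)
  refine ⟨Y, fun y hy => ?_⟩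
  have hy2 : (2:ℝ) ≤ y := le_trans hY2 hy
  have hy0 : (0:ℝ) < y := by linarith
  have hlog : 0 < Real.log y := Real.log_pos (by linarith)
  have hyL : 0 < y * Real.log y ^ j := by positivity
  have h := hQ y hy
  rw [Real.dist_eq]
  have hfne : (Nat.factorial j : ℝ) ≠ 0 := by positivity
  have heq : (A (j+1) ⌊y⌋₊ : ℝ) / (y * Real.log y ^ j) - 1 / (Nat.factorial j)
      = ((A (j+1) ⌊y⌋₊ : ℝ) - y * Real.log y ^ j / (Nat.factorial j)) / (y * Real.log y ^ j) := by
    field_simp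
    try ring
    try exact Or.inl trivial
  rw [heq, abs_div, abs_of_pos hyL, div_lt_iff₀ hyL]
  calc |(A (j+1) ⌊y⌋₊:ℝ) - y * Real.log y ^ j / (Nat.factorial j)|
      ≤ (ε/2) * (y * Real.log y ^ j) := h
    _ < ε * (y * Real.log y ^ j) := by nlinarith

lemma tendsto_A_d {k : ℕ} (hk : 1 ≤ k) {d : ℕ} (hd : 1 ≤ d) :
    Tendsto (fun x : ℝ => (A k (⌊x⌋₊ / d ^ k) : ℝ) / (x * Real.log x ^ (k - 1)))
      atTop (nhds (1 / ((d:ℝ)^k * (Nat.factorial (k - 1))))) := by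
  have hc : (0:ℝ) < (d:ℝ)^k := by positivity
  have h1 : Tendsto (fun x : ℝ => x / ((d:ℝ)^k)) atTop atTop :=
    Tendsto.atTop_div_const hc tendsto_id
  have hA := (tendsto_A hk).comp h1
  have hlogdiv : Tendsto (fun x : ℝ => Real.log ((d:ℝ)^k) / Real.log x) atTop (nhds 0) :=
    Tendsto.div_atTop tendsto_const_nhds Real.tendsto_log_atTop
  have hlog : Tendsto (fun x : ℝ => Real.log (x/(d:ℝ)^k) / Real.log x) atTop (nhds 1) := by
    have heq : ∀ᶠ x : ℝ in atTop, 1 - Real.log ((d:ℝ)^k) / Real.log x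
        = Real.log (x/(d:ℝ)^k) / Real.log x := by
      filter_upwards [eventually_gt_atTop 1] with x hx
      have hx0 : (0:ℝ) < x := by linarith
      have hlx : 0 < Real.log x := Real.log_pos hx
      rw [Real.log_div hx0.ne' hc.ne']
      field_simp
    have h0 : Tendsto (fun x : ℝ => 1 - Real.log ((d:ℝ)^k) / Real.log x) atTop
        (nhds (1 - 0)) := tendsto_const_nhds.sub hlogdiv
    rw [sub_zero] at h0
    exact Tendsto.congr' heq h0
  have hpow := hlog.pow (k-1)
  have hmul := (hA.mul hpow).mul_const (1/((d:ℝ)^k))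
  have hval : 1 / (Nat.factorial (k-1) : ℝ) * 1 ^ (k - 1) * (1/((d:ℝ)^k))
      = 1 / ((d:ℝ)^k * (Nat.factorial (k-1))) := by
    rw [one_pow, mul_one, div_mul_div_comm, one_mul, mul_comm]
  rw [hval] at hmul
  refine Tendsto.congr' ?_ hmul
  filter_upwards [eventually_ge_atTop (2*((d:ℝ)^k)), eventually_gt_atTop 1] with x hx2c hx1
  have hx0 : (0:ℝ) < x := by linarith
  have hlx : 0 < Real.log x := Real.log_pos hx1
  have hz2 : (2:ℝ) ≤ x/((d:ℝ)^k) := by rw [le_div_iff₀ hc]; linarith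
  have hlz : 0 < Real.log (x/((d:ℝ)^k)) := Real.log_pos (by linarith)
  have hfl : ⌊x⌋₊ / d^k = ⌊x / ((d:ℝ)^k)⌋₊ := by
    rw [show ((d:ℝ)^k) = ((d^k : ℕ) : ℝ) from by push_cast; ring, Nat.floor_div_natCast]
  simp only [Function.comp]
  rw [hfl, div_pow]
  field_simp

-- === gcd rearrangement ===

lemma sum_gcd (k : ℕ) (hk : 1 ≤ k) (f g : ℕ → ℂ)
    (hfg : ∀ n, 1 ≤ n → f n = ∑ d ∈ n.divisors, g d) (N : ℕ) :
    ∑ v ∈ Sfin k N, f (Finset.univ.gcd v)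
      = ∑ d ∈ Icc 1 N, g d * (A k (N / d ^ k) : ℂ) := by
  have hstep : ∀ v ∈ Sfin k N, f (Finset.univ.gcd v)
      = ∑ d ∈ Icc 1 N, if d ∣ Finset.univ.gcd v then g d else 0 := by
    intro v hv
    rw [mem_Sfin] at hv
    let i0 : Fin k := ⟨0, by omega⟩
    have hv1 := hv.1 i0
    have hg1 : 1 ≤ Finset.univ.gcd v := by
      rcases Nat.eq_zero_or_pos (Finset.univ.gcd v) with h | h
      · rw [Finset.gcd_eq_zero_iff] at h
        have := h i0 (mem_univ i0)
        omega
      · omega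
    have hgN : Finset.univ.gcd v ≤ N := by
      have h1 : Finset.univ.gcd v ∣ v i0 := Finset.gcd_dvd (mem_univ i0)
      have h2 : v i0 ≤ N :=
        le_trans (Finset.single_le_prod' (fun j _ => hv.1 j) (mem_univ i0)) hv.2
      exact le_trans (Nat.le_of_dvd (by omega) h1) h2
    rw [hfg _ hg1]
    have hdiv : (Finset.univ.gcd v).divisors
        = (Icc 1 N).filter (· ∣ Finset.univ.gcd v) := by
      ext e
      simp only [Nat.mem_divisors, Finset.mem_filter, mem_Icc]
      constructor
      · rintro ⟨he, _⟩
        exact ⟨⟨Nat.pos_of_dvd_of_pos he (by omega),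
          le_trans (Nat.le_of_dvd (by omega) he) hgN⟩, he⟩
      · rintro ⟨_, he⟩
        exact ⟨he, by omega⟩
    rw [hdiv, Finset.sum_filter]
  rw [Finset.sum_congr rfl hstep, Finset.sum_comm]
  apply Finset.sum_congr rfl
  intro d hd
  rw [mem_Icc] at hd
  rw [← Finset.sum_filter]
  have hfilter : (Sfin k N).filter (fun v => d ∣ Finset.univ.gcd v)
      = (Sfin k N).filter (fun v => ∀ i, d ∣ v i) := by
    apply Finset.filter_congr
    intro v _
    rw [Finset.dvd_gcd_iff]
    constructor
    · intro h i; exact h i (mem_univ i)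
    · intro h i _; exact h i
  rw [hfilter, Finset.sum_const, card_dvd_filter k N d hd.1, nsmul_eq_mul, mul_comm]

-- === Dirichlet series layer ===

open ArithmeticFunction in
def Ff (f : ℕ → ℂ) : ArithmeticFunction ℂ := ⟨fun n => if n = 0 then 0 else f n, if_pos rfl⟩

open ArithmeticFunction in
def Gf (f : ℕ → ℂ) : ArithmeticFunction ℂ :=
  ((ArithmeticFunction.moebius : ArithmeticFunction ℤ) : ArithmeticFunction ℂ) * Ff f

open ArithmeticFunction in
lemma zeta_mul_Gf (f : ℕ → ℂ) :
    ((ArithmeticFunction.zeta : ArithmeticFunction ℕ) : ArithmeticFunction ℂ) * Gf f = Ff f := by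
  rw [Gf, ← mul_assoc]
  rw [mul_comm ((ArithmeticFunction.zeta : ArithmeticFunction ℕ) : ArithmeticFunction ℂ)]
  rw [coe_moebius_mul_coe_zeta, one_mul]

open ArithmeticFunction in
lemma f_eq_sum_Gf (f : ℕ → ℂ) {n : ℕ} (hn : 1 ≤ n) :
    f n = ∑ d ∈ n.divisors, Gf f d := by
  have h := congrArg (fun F : ArithmeticFunction ℂ => F n) (zeta_mul_Gf f)
  rw [coe_zeta_mul_apply] at h
  have hFn : (Ff f) n = f n := by
    rw [Ff]
    simp only [ArithmeticFunction.coe_mk]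
    rw [if_neg (by omega)]
  rw [← hFn]
  exact h.symm

-- === main theorem ===

open ArithmeticFunction in
theorem hyperbolic_wintner_gcd' (k : ℕ) (hk : 2 ≤ k) (f : ℕ → ℂ)
    (hf : Summable fun n : ℕ => ‖f n‖ / (n : ℝ) ^ k) :
    Tendsto (fun x : ℝ =>
        (∑ n ∈ Finset.Icc 1 ⌊x⌋₊, ∑ v ∈ tuplesProd k n, f (Finset.univ.gcd v)) /
          ((x * Real.log x ^ (k - 1) : ℝ) : ℂ))
      atTop
      (nhds ((1 / ((Nat.factorial (k - 1) : ℂ) * riemannZeta k)) *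
        ∑' n : ℕ, f n / (n : ℂ) ^ k)) := by
  have hk1 : 1 ≤ k := by omega
  have hkne : k ≠ 0 := by omega
  have hG0 : Gf f 0 = 0 := ArithmeticFunction.map_zero
  have hsre : 1 < ((k : ℂ)).re := by
    rw [Complex.natCast_re]
    exact_mod_cast (by omega : 1 < k)
  have hFapp : ∀ {n : ℕ}, n ≠ 0 → (Ff f) n = f n := by
    intro n hn
    rw [Ff]
    simp [ArithmeticFunction.coe_mk, hn]
  have hFsum : LSeriesSummable (⇑(Ff f)) (k : ℂ) := by
    apply Summable.of_norm
    apply Summable.of_nonneg_of_le (fun n => norm_nonneg _) _ hf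
    intro n
    rw [LSeries.norm_term_eq]
    rcases eq_or_ne n 0 with rfl | hn
    · simp [zero_pow hkne]
    · rw [if_neg hn, hFapp hn, Complex.natCast_re, Real.rpow_natCast]
  have hμsum : LSeriesSummable
      (⇑((ArithmeticFunction.moebius : ArithmeticFunction ℤ) : ArithmeticFunction ℂ)) (k : ℂ) := by
    apply Summable.of_norm
    have hsum : Summable (fun n : ℕ => 1 / (n : ℝ) ^ k) :=
      Real.summable_one_div_nat_pow.mpr (by omega)
    apply Summable.of_nonneg_of_le (fun n => norm_nonneg _) _ hsum
    intro n
    rw [LSeries.norm_term_eq]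
    rcases eq_or_ne n 0 with rfl | hn
    · simp [zero_pow hkne]
    · rw [if_neg hn, Complex.natCast_re, Real.rpow_natCast]
      have hμ1 : ‖((ArithmeticFunction.moebius : ArithmeticFunction ℤ) :
          ArithmeticFunction ℂ) n‖ ≤ 1 := by
        rw [ArithmeticFunction.intCoe_apply]
        rw [show ((ArithmeticFunction.moebius n : ℤ) : ℂ)
            = (((ArithmeticFunction.moebius n : ℤ) : ℝ) : ℂ) from by push_cast; rfl]
        rw [Complex.norm_real, Real.norm_eq_abs]
        exact_mod_cast ArithmeticFunction.abs_moebius_le_one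
      have hn0 : (0:ℝ) < (n:ℝ)^k := by
        have : (1:ℝ) ≤ (n:ℝ) := by exact_mod_cast (by omega : 1 ≤ n)
        positivity
      rw [div_le_div_iff₀ hn0 hn0]
      nlinarith
  have hGsum : LSeriesSummable (⇑(Gf f)) (k : ℂ) := by
    have h := ArithmeticFunction.LSeriesSummable_mul hμsum hFsum
    rw [Gf]
    exact h
  have hζcoe : ⇑((ArithmeticFunction.zeta : ArithmeticFunction ℕ) : ArithmeticFunction ℂ)
      = fun n => ((ArithmeticFunction.zeta n : ℕ) : ℂ) := funext fun n => ArithmeticFunction.natCoe_apply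
  have hζsum : LSeriesSummable (⇑((ArithmeticFunction.zeta : ArithmeticFunction ℕ) : ArithmeticFunction ℂ)) (k : ℂ) := by
    rw [hζcoe]
    exact ArithmeticFunction.LSeriesSummable_zeta_iff.mpr hsre
  have hLF : LSeries (⇑(Ff f)) (k : ℂ) = riemannZeta k * LSeries (⇑(Gf f)) (k : ℂ) := by
    conv_lhs => rw [← zeta_mul_Gf f]
    rw [ArithmeticFunction.LSeries_mul' hζsum hGsum]
    congr 1
    rw [hζcoe]
    exact ArithmeticFunction.LSeries_zeta_eq_riemannZeta hsre
  have hzne : riemannZeta k ≠ 0 := riemannZeta_ne_zero_of_one_lt_re hsre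
  have hfactne : ((Nat.factorial (k - 1) : ℕ) : ℂ) ≠ 0 :=
    Nat.cast_ne_zero.mpr (Nat.factorial_ne_zero _)
  have hT1 : ∑' n : ℕ, f n / (n : ℂ) ^ k = LSeries (⇑(Ff f)) (k : ℂ) := by
    rw [LSeries]
    apply tsum_congr
    intro n
    rcases eq_or_ne n 0 with rfl | hn
    · rw [LSeries.term_zero]
      simp [zero_pow hkne]
    · rw [LSeries.term_of_ne_zero hn, hFapp hn, Complex.cpow_natCast]
  have hT2 : ∑' d : ℕ, (Gf f d) / (d : ℂ) ^ k = LSeries (⇑(Gf f)) (k : ℂ) := by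
    rw [LSeries]
    apply tsum_congr
    intro n
    rcases eq_or_ne n 0 with rfl | hn
    · rw [LSeries.term_zero, hG0, zero_div]
    · rw [LSeries.term_of_ne_zero hn, Complex.cpow_natCast]
  have hBsum : Summable (fun d : ℕ => ‖Gf f d‖ / (d : ℝ) ^ k) := by
    have h := summable_norm_iff.mpr hGsum
    refine h.congr fun n => ?_
    rw [LSeries.norm_term_eq]
    rcases eq_or_ne n 0 with rfl | hn
    · simp [zero_pow hkne, hG0]
    · rw [if_neg hn, Complex.natCast_re, Real.rpow_natCast]
  -- dominated convergence setup
  set W : ℝ → ℕ → ℂ := fun x d =>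
    Gf f d * (((A k (⌊x⌋₊ / d ^ k) : ℝ) / (x * Real.log x ^ (k - 1)) : ℝ) : ℂ) with hW
  set gl : ℕ → ℂ := fun d =>
    Gf f d * (((1 / ((d : ℝ) ^ k * (Nat.factorial (k - 1))) : ℝ)) : ℂ) with hgl
  set bound : ℕ → ℝ := fun d => (2 : ℝ) ^ (k - 1) * (‖Gf f d‖ / (d : ℝ) ^ k) with hbound
  have hbound_sum : Summable bound := hBsum.mul_left _
  have hlimit : ∀ d : ℕ, Tendsto (fun x => W x d) atTop (nhds (gl d)) := by
    intro d
    rcases Nat.eq_zero_or_pos d with rfl | hd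
    · simp only [hW, hgl, hG0, zero_mul]
      exact tendsto_const_nhds
    · simp only [hW, hgl]
      have ht := tendsto_A_d (k := k) hk1 hd
      exact ((Complex.continuous_ofReal.tendsto _).comp ht).const_mul _
  have hbound_ev : ∀ᶠ x : ℝ in atTop, ∀ d, ‖W x d‖ ≤ bound d := by
    filter_upwards [eventually_ge_atTop (Real.exp 1)] with x hx
    have he1 : (1:ℝ) < Real.exp 1 := by
      have := Real.exp_one_gt_d9
      linarith
    have hx1 : (1:ℝ) < x := lt_of_lt_of_le he1 hx
    have hx0 : (0:ℝ) < x := by linarith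
    have hlx1 : 1 ≤ Real.log x := by
      rw [← Real.log_exp 1]
      exact Real.log_le_log (Real.exp_pos 1) hx
    have hlx0 : (0:ℝ) < Real.log x := by linarith
    intro d
    rcases Nat.eq_zero_or_pos d with rfl | hd
    · simp only [hW, hbound, hG0, zero_mul, norm_zero]
      simp
    · simp only [hW, hbound]
      rw [norm_mul]
      have hcd : (0:ℝ) < (d:ℝ)^k := by
        have : (1:ℝ) ≤ (d:ℝ) := by exact_mod_cast hd
        positivity
      have hnormr : ‖(((A k (⌊x⌋₊ / d ^ k) : ℝ) / (x * Real.log x ^ (k - 1)) : ℝ) : ℂ)‖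
          = (A k (⌊x⌋₊ / d ^ k) : ℝ) / (x * Real.log x ^ (k - 1)) := by
        rw [Complex.norm_real, Real.norm_eq_abs]
        exact abs_of_nonneg (by positivity)
      rw [hnormr]
      have hratio : (A k (⌊x⌋₊ / d ^ k) : ℝ) / (x * Real.log x ^ (k - 1))
          ≤ (2:ℝ) ^ (k - 1) / (d:ℝ)^k := by
        have hfl : ⌊x⌋₊ / d ^ k = ⌊x / ((d:ℝ)^k)⌋₊ := by
          rw [show ((d:ℝ)^k) = ((d^k : ℕ) : ℝ) from by push_cast; ring, Nat.floor_div_natCast]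
        rw [hfl]
        rcases lt_or_ge (x / ((d:ℝ)^k)) 1 with hz1 | hz1
        · rw [Nat.floor_eq_zero.mpr hz1, A_zero hk1]
          simp only [Nat.cast_zero, zero_div]
          positivity
        · have hA := A_floor_le hk1 hz1
          have hz0 : (0:ℝ) < x / ((d:ℝ)^k) := by linarith
          have hzx : x / ((d:ℝ)^k) ≤ x := by
            apply div_le_self hx0.le
            have : (1:ℝ) ≤ (d:ℝ) := by exact_mod_cast hd
            exact one_le_pow₀ this
          have hlogz : Real.log (x / ((d:ℝ)^k)) ≤ Real.log x := Real.log_le_log hz0 hzx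
          have h1z : 0 ≤ 1 + Real.log (x / ((d:ℝ)^k)) := by
            have := Real.log_nonneg hz1
            linarith
          have hpow2 : (1 + Real.log (x / ((d:ℝ)^k))) ^ (k-1) ≤ (2 * Real.log x) ^ (k-1) :=
            pow_le_pow_left₀ h1z (by linarith) _
          have hAz : (A k ⌊x / ((d:ℝ)^k)⌋₊ : ℝ)
              ≤ (x / ((d:ℝ)^k)) * ((2:ℝ)^(k-1) * Real.log x ^ (k-1)) := by
            calc (A k ⌊x / ((d:ℝ)^k)⌋₊ : ℝ)
                ≤ (x / ((d:ℝ)^k)) * (1 + Real.log (x / ((d:ℝ)^k))) ^ (k-1) := hA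
              _ ≤ (x / ((d:ℝ)^k)) * (2 * Real.log x) ^ (k-1) :=
                  mul_le_mul_of_nonneg_left hpow2 hz0.le
              _ = (x / ((d:ℝ)^k)) * ((2:ℝ)^(k-1) * Real.log x ^ (k-1)) := by rw [mul_pow]
          rw [div_le_div_iff₀ (by positivity) hcd]
          calc (A k ⌊x / ((d:ℝ)^k)⌋₊ : ℝ) * (d:ℝ)^k
              ≤ ((x / ((d:ℝ)^k)) * ((2:ℝ)^(k-1) * Real.log x ^ (k-1))) * (d:ℝ)^k :=
                mul_le_mul_of_nonneg_right hAz hcd.le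
            _ = (2:ℝ)^(k-1) * ((x / ((d:ℝ)^k)) * (d:ℝ)^k * Real.log x ^ (k-1)) := by ring
            _ = (2:ℝ)^(k-1) * (x * Real.log x ^ (k-1)) := by
                rw [div_mul_cancel₀ _ hcd.ne']
      calc ‖Gf f d‖ * ((A k (⌊x⌋₊ / d ^ k) : ℝ) / (x * Real.log x ^ (k - 1)))
          ≤ ‖Gf f d‖ * ((2:ℝ) ^ (k - 1) / (d:ℝ)^k) :=
            mul_le_mul_of_nonneg_left hratio (norm_nonneg _)
        _ = (2:ℝ) ^ (k-1) * (‖Gf f d‖ / (d:ℝ)^k) := by ring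
  have key := tendsto_tsum_of_dominated_convergence hbound_sum hlimit hbound_ev
  have hglval : ∑' d, gl d
      = (1 / ((Nat.factorial (k - 1) : ℂ) * riemannZeta k)) * ∑' n : ℕ, f n / (n : ℂ) ^ k := by
    have h1 : ∀ d : ℕ, gl d = (Gf f d / (d : ℂ) ^ k) * (1 / ((Nat.factorial (k-1) : ℕ) : ℂ)) := by
      intro d
      rcases eq_or_ne d 0 with rfl | hd
      · simp [hgl, hG0]
      · simp only [hgl]
        have hd0 : ((d : ℂ)) ^ k ≠ 0 := by
          apply pow_ne_zero
          exact_mod_cast hd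
        rw [show (((1 / ((d : ℝ) ^ k * (Nat.factorial (k - 1))) : ℝ)) : ℂ)
            = 1 / ((d : ℂ) ^ k * ((Nat.factorial (k-1) : ℕ) : ℂ)) from by push_cast; ring]
        field_simp
    rw [tsum_congr h1, tsum_mul_right, hT2, hT1, hLF]
    field_simp
  have hfun : (fun x : ℝ => ∑' d, W x d) =ᶠ[atTop] (fun x : ℝ =>
      (∑ n ∈ Finset.Icc 1 ⌊x⌋₊, ∑ v ∈ tuplesProd k n, f (Finset.univ.gcd v)) /
        ((x * Real.log x ^ (k - 1) : ℝ) : ℂ)) := by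
    filter_upwards [eventually_ge_atTop (1:ℝ)] with x hx1
    have hsum0 : ∀ d ∉ Finset.Icc 1 ⌊x⌋₊, W x d = 0 := by
      intro d hd
      rw [mem_Icc] at hd
      push_neg at hd
      rcases Nat.eq_zero_or_pos d with rfl | hd0
      · simp [hW, hG0]
      · have hdN : ⌊x⌋₊ < d := hd hd0
        have hzero : ⌊x⌋₊ / d ^ k = 0 :=
          Nat.div_eq_of_lt (lt_of_lt_of_le hdN (Nat.le_self_pow hkne d))
        simp only [hW, hzero, A_zero hk1]
        simp
    have h1 : (∑' d, W x d) = ∑ d ∈ Finset.Icc 1 ⌊x⌋₊, W x d :=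
      (hasSum_sum_of_ne_finset_zero hsum0).tsum_eq
    rw [h1,
      sum_tuplesProd k ⌊x⌋₊ (fun v => f (Finset.univ.gcd v)),
      sum_gcd k hk1 f (⇑(Gf f)) (fun n hn => f_eq_sum_Gf f hn) ⌊x⌋₊,
      Finset.sum_div]
    apply Finset.sum_congr rfl
    intro d _
    simp only [hW]
    rw [Complex.ofReal_div]
    push_cast
    rw [mul_div_assoc]
  have final := Tendsto.congr' hfun key
  rwa [hglval] at final

end HypWin

theorem hyperbolic_wintner_gcd (k : ℕ) (hk : 2 ≤ k) (f : ℕ → ℂ)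
    (hf : Summable fun n : ℕ => ‖f n‖ / (n : ℝ) ^ k) :
    Tendsto (fun x : ℝ =>
        (∑ n ∈ Finset.Icc 1 ⌊x⌋₊, ∑ v ∈ tuplesProd k n, f (Finset.univ.gcd v)) /
          ((x * Real.log x ^ (k - 1) : ℝ) : ℂ))
      atTop
      (nhds ((1 / ((Nat.factorial (k - 1) : ℂ) * riemannZeta k)) *
        ∑' n : ℕ, f n / (n : ℂ) ^ k)) :=
  HypWin.hyperbolic_wintner_gcd' k hk f hf
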